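/- The determinant P_k(θ) can be written as a polynomial Q_k of degree at most k in cos 2π(θ + (k−1)α/2): there exist real coefficients c_0,…,c_k (depending on λ, α, E) such that P_k(θ) = Σ_{j=0}^{k} c_j cos^j 2π(θ + (k−1)α/2) for all θ. -/

import Mathlib

open Real Matrix Polynomial

/-- The matrix of `R_{[0,k-1]} (H_{λ,α,θ} - E) R_{[0,k-1]}` for the almost Mathieu
operator. -/
noncomputable def amoMat (lam α θ E : ℝ) (k : ℕ) :
    Matrix (Fin k) (Fin k) ℝ := fun i j =>
  (if i = j then 2 * lam * Real.cos (2 * π * (θ + (i : ℕ) * α)) - E else 0) +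
    (if (i : ℕ) + 1 = (j : ℕ) ∨ (j : ℕ) + 1 = (i : ℕ) then 1 else 0)

namespace AMOAux


/-- `f` is a trig polynomial of degree at most `m`, written as
`A(cos x) + sin x * B(cos x)` with `deg A ≤ m`, `deg B < m`. -/
def Good (m : ℕ) (f : ℝ → ℝ) : Prop :=
  ∃ A B : Polynomial ℝ, A.degree ≤ (m : WithBot ℕ) ∧ B.degree < (m : WithBot ℕ) ∧
    ∀ x : ℝ, f x = A.eval (Real.cos x) + Real.sin x * B.eval (Real.cos x)

lemma wb_le_lt {a b : WithBot ℕ} {m n : ℕ} (ha : a ≤ (m : WithBot ℕ)) (hb : b < (n : WithBot ℕ)) :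
    a + b < ((m + n : ℕ) : WithBot ℕ) := by
  simp only [Nat.cast_withBot] at *
  induction a using WithBot.recBotCoe with
  | bot => rw [WithBot.bot_add]; exact WithBot.bot_lt_coe _
  | coe a =>
    induction b using WithBot.recBotCoe with
    | bot => rw [WithBot.add_bot]; exact WithBot.bot_lt_coe _
    | coe b =>
      have ha' : a ≤ m := WithBot.coe_le_coe.mp ha
      have hb' : b < n := WithBot.coe_lt_coe.mp hb
      rw [← WithBot.coe_add]
      exact WithBot.coe_lt_coe.mpr (by omega)

lemma wb_lt_le {a b : WithBot ℕ} {m n : ℕ} (ha : a < (m : WithBot ℕ)) (hb : b ≤ (n : WithBot ℕ)) :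
    a + b < ((m + n : ℕ) : WithBot ℕ) := by
  rw [add_comm a b, Nat.add_comm m n]
  exact wb_le_lt hb ha

lemma wb_two_add {a b : WithBot ℕ} {m n : ℕ} (ha : a < (m : WithBot ℕ)) (hb : b < (n : WithBot ℕ)) :
    2 + (a + b) ≤ ((m + n : ℕ) : WithBot ℕ) := by
  simp only [Nat.cast_withBot] at *
  induction a using WithBot.recBotCoe with
  | bot => simp
  | coe a =>
    induction b using WithBot.recBotCoe with
    | bot => simp
    | coe b =>
      have ha' : a < m := WithBot.coe_lt_coe.mp ha
      have hb' : b < n := WithBot.coe_lt_coe.mp hb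
      have h2 : (2 : WithBot ℕ) = ((2:ℕ) : WithBot ℕ) := by norm_cast
      rw [← WithBot.coe_add, h2, Nat.cast_withBot, ← WithBot.coe_add]
      exact WithBot.coe_le_coe.mpr (by omega)

lemma good_const (m : ℕ) (a : ℝ) : Good m (fun _ => a) := by
  refine ⟨C a, 0, degree_C_le.trans ?_, ?_, fun x => by simp⟩
  · exact_mod_cast Nat.zero_le m
  · rw [degree_zero]
    simp only [Nat.cast_withBot]
    exact WithBot.bot_lt_coe _

lemma good_add {m : ℕ} {f g : ℝ → ℝ} (hf : Good m f) (hg : Good m g) :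
    Good m (fun x => f x + g x) := by
  obtain ⟨A₁, B₁, hA₁, hB₁, h₁⟩ := hf
  obtain ⟨A₂, B₂, hA₂, hB₂, h₂⟩ := hg
  refine ⟨A₁ + A₂, B₁ + B₂, (degree_add_le _ _).trans (max_le hA₁ hA₂),
    (degree_add_le _ _).trans_lt (max_lt hB₁ hB₂), fun x => ?_⟩
  show f x + g x = _
  rw [h₁ x, h₂ x]; simp [eval_add]; ring

lemma good_smul {m : ℕ} {f : ℝ → ℝ} (c : ℝ) (hf : Good m f) :
    Good m (fun x => c * f x) := by
  obtain ⟨A, B, hA, hB, h⟩ := hf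
  have hCA : (C c * A).degree ≤ A.degree := by
    calc (C c * A).degree ≤ (C c).degree + A.degree := degree_mul_le _ _
      _ ≤ 0 + A.degree := add_le_add degree_C_le le_rfl
      _ = A.degree := zero_add _
  have hCB : (C c * B).degree ≤ B.degree := by
    calc (C c * B).degree ≤ (C c).degree + B.degree := degree_mul_le _ _
      _ ≤ 0 + B.degree := add_le_add degree_C_le le_rfl
      _ = B.degree := zero_add _
  refine ⟨C c * A, C c * B, hCA.trans hA, hCB.trans_lt hB, fun x => ?_⟩
  show c * f x = _
  rw [h x]; simp [eval_mul]; ring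

lemma good_mul {m n : ℕ} {f g : ℝ → ℝ} (hf : Good m f) (hg : Good n g) :
    Good (m + n) (fun x => f x * g x) := by
  obtain ⟨A₁, B₁, hA₁, hB₁, h₁⟩ := hf
  obtain ⟨A₂, B₂, hA₂, hB₂, h₂⟩ := hg
  refine ⟨A₁ * A₂ + (1 - X ^ 2) * (B₁ * B₂), A₁ * B₂ + B₁ * A₂, ?_, ?_, fun x => ?_⟩
  · refine (degree_add_le _ _).trans (max_le ?_ ?_)
    · refine (degree_mul_le _ _).trans ?_
      calc A₁.degree + A₂.degree ≤ (m : WithBot ℕ) + (n : WithBot ℕ) := add_le_add hA₁ hA₂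
        _ = ((m + n : ℕ) : WithBot ℕ) := by push_cast; ring
    · refine (degree_mul_le _ _).trans ?_
      have h1 : (1 - X ^ 2 : Polynomial ℝ).degree ≤ 2 := by
        refine (degree_sub_le _ _).trans (max_le ?_ ?_)
        · exact degree_one_le.trans (by norm_cast)
        · rw [degree_X_pow]; norm_cast
      calc (1 - X ^ 2 : Polynomial ℝ).degree + (B₁ * B₂).degree
          ≤ 2 + (B₁ * B₂).degree := add_le_add h1 le_rfl
        _ ≤ 2 + (B₁.degree + B₂.degree) := add_le_add le_rfl (degree_mul_le _ _)
        _ ≤ ((m + n : ℕ) : WithBot ℕ) := wb_two_add hB₁ hB₂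
  · refine (degree_add_le _ _).trans_lt (max_lt ?_ ?_)
    · exact (degree_mul_le _ _).trans_lt (wb_le_lt hA₁ hB₂)
    · exact (degree_mul_le _ _).trans_lt (wb_lt_le hB₁ hA₂)
  · show f x * g x = _
    rw [h₁ x, h₂ x]
    simp only [eval_add, eval_mul, eval_sub, eval_pow, eval_one, eval_X]
    have hs : Real.sin x ^ 2 = 1 - Real.cos x ^ 2 := Real.sin_sq x
    linear_combination (Polynomial.eval (Real.cos x) B₁ * Polynomial.eval (Real.cos x) B₂) * hs

lemma good_congr {m : ℕ} {f g : ℝ → ℝ} (hf : Good m f) (h : ∀ x, f x = g x) : Good m g := by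
  have : f = g := funext h
  rwa [this] at hf

lemma good_cast {m n : ℕ} {f : ℝ → ℝ} (hf : Good m f) (h : m = n) : Good n f := h ▸ hf

lemma good_sum {ι : Type*} (s : Finset ι) (g : ι → ℝ → ℝ) (m : ℕ)
    (h : ∀ i ∈ s, Good m (g i)) : Good m (fun x => ∑ i ∈ s, g i x) := by
  classical
  induction s using Finset.induction_on with
  | empty => exact good_congr (good_const m 0) (fun x => by simp)
  | @insert a s ha ih =>
    refine good_congr (good_add (h a (Finset.mem_insert_self _ _))
      (ih fun i hi => h i (Finset.mem_insert_of_mem hi))) (fun x => ?_)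
    rw [Finset.sum_insert ha]

lemma good_prod {ι : Type*} (s : Finset ι) (g : ι → ℝ → ℝ)
    (h : ∀ i ∈ s, Good 1 (g i)) : Good s.card (fun x => ∏ i ∈ s, g i x) := by
  classical
  induction s using Finset.induction_on with
  | empty => exact good_congr (good_const 0 1) (fun x => by simp)
  | @insert a s ha ih =>
    have := good_mul (h a (Finset.mem_insert_self _ _))
      (ih fun i hi => h i (Finset.mem_insert_of_mem hi))
    refine good_cast (good_congr this (fun x => ?_)) (by rw [Finset.card_insert_of_notMem ha, Nat.add_comm] : 1 + s.card = (insert a s).card)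
    rw [Finset.prod_insert ha]

lemma good_diag (lam E t : ℝ) : Good 1 (fun y => 2 * lam * Real.cos (y + t) - E) := by
  refine ⟨C (2 * lam * Real.cos t) * X - C E, C (-(2 * lam * Real.sin t)), ?_, ?_, fun x => ?_⟩
  · refine (degree_sub_le _ _).trans (max_le ?_ (degree_C_le.trans (by exact_mod_cast Nat.zero_le 1)))
    refine (degree_mul_le _ _).trans ?_
    calc (C (2 * lam * Real.cos t)).degree + (X : Polynomial ℝ).degree
        ≤ 0 + 1 := add_le_add degree_C_le degree_X_le
      _ = 1 := zero_add _
      _ ≤ ((1 : ℕ) : WithBot ℕ) := by norm_cast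
  · refine degree_C_le.trans_lt ?_
    exact_mod_cast Nat.zero_lt_one
  · simp only [eval_sub, eval_mul, eval_C, eval_X]
    rw [Real.cos_add]; ring




lemma good_entry (lam α E cst : ℝ) (k : ℕ) (i j : Fin k) :
    Good 1 (fun y => amoMat lam α (y / (2 * π) - cst) E k i j) := by
  have hπ : (π : ℝ) ≠ 0 := Real.pi_ne_zero
  unfold amoMat
  refine good_add ?_ (good_const 1 _)
  by_cases h : i = j
  · simp only [if_pos h]
    have hfun : (fun y : ℝ => 2 * lam * Real.cos (2 * π * ((y / (2 * π) - cst) + ((i : ℕ) : ℝ) * α)) - E)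
        = (fun y : ℝ => 2 * lam * Real.cos (y + 2 * π * (((i : ℕ) : ℝ) * α - cst)) - E) := by
      funext y
      congr 2
      field_simp
      ring_nf
    rw [hfun]
    exact good_diag lam E _
  · simp only [if_neg h]
    exact good_const 1 0

lemma amo_even (lam α E : ℝ) (k : ℕ) (y : ℝ) :
    (amoMat lam α (-y / (2 * π) - ((k : ℝ) - 1) * α / 2) E k).det
      = (amoMat lam α (y / (2 * π) - ((k : ℝ) - 1) * α / 2) E k).det := by
  have hM : amoMat lam α (-y / (2 * π) - ((k : ℝ) - 1) * α / 2) E k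
      = (amoMat lam α (y / (2 * π) - ((k : ℝ) - 1) * α / 2) E k).submatrix
          (⇑(Fin.revPerm : Equiv.Perm (Fin k))) (⇑(Fin.revPerm : Equiv.Perm (Fin k))) := by
    ext i j
    have hi := i.isLt
    have hj := j.isLt
    simp only [Matrix.submatrix_apply, Fin.revPerm_apply, amoMat]
    have hrev : ((Fin.rev i : Fin k) : ℕ) = k - ((i : ℕ) + 1) := Fin.val_rev i
    congr 1
    · by_cases h : i = j
      · subst h
        rw [if_pos rfl, if_pos rfl]
        have hcast : (((Fin.rev i : Fin k) : ℕ) : ℝ) = (k : ℝ) - 1 - ((i : ℕ) : ℝ) := by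
          rw [hrev, Nat.cast_sub hi]
          push_cast
          ring
        have harg : 2 * π * ((-y / (2 * π) - ((k : ℝ) - 1) * α / 2) + ((i : ℕ) : ℝ) * α)
            = -(2 * π * ((y / (2 * π) - ((k : ℝ) - 1) * α / 2) + (((Fin.rev i : Fin k) : ℕ) : ℝ) * α)) := by
          rw [hcast]
          field_simp
          ring_nf
        rw [harg, Real.cos_neg]
      · rw [if_neg h, if_neg (fun hh => h (Fin.rev_inj.mp hh))]
    · have hcond : (((Fin.rev i : Fin k) : ℕ) + 1 = ((Fin.rev j : Fin k) : ℕ)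
            ∨ ((Fin.rev j : Fin k) : ℕ) + 1 = ((Fin.rev i : Fin k) : ℕ))
          ↔ ((i : ℕ) + 1 = (j : ℕ) ∨ (j : ℕ) + 1 = (i : ℕ)) := by
        rw [Fin.val_rev, Fin.val_rev]
        omega
      simp only [hcond]
  rw [hM, Matrix.det_submatrix_equiv_self]

lemma good_det (lam α E cst : ℝ) (k : ℕ) :
    Good k (fun y => (amoMat lam α (y / (2 * π) - cst) E k).det) := by
  have hdet : ∀ y : ℝ, (amoMat lam α (y / (2 * π) - cst) E k).det
      = ∑ σ ∈ (Finset.univ : Finset (Equiv.Perm (Fin k))),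
          ((Equiv.Perm.sign σ : ℤ) : ℝ) *
            ∏ i ∈ (Finset.univ : Finset (Fin k)), amoMat lam α (y / (2 * π) - cst) E k (σ i) i := by
    intro y
    rw [Matrix.det_apply']
  refine good_congr (good_sum Finset.univ _ k fun σ _ => ?_) (fun y => (hdet y).symm)
  refine good_smul _ ?_
  refine good_cast (good_prod Finset.univ (fun i y => amoMat lam α (y / (2 * π) - cst) E k (σ i) i)
    fun i _ => good_entry lam α E cst k (σ i) i) ?_
  simp

end AMOAux

open AMOAux in
/-- `P_k(θ)` can be written as a polynomial of degree at most `k` in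
`cos 2π(θ + (k-1)α/2)`: there exist coefficients `c_0, …, c_k` (depending on
`λ, α, E`) with `P_k(θ) = Σ_{j=0}^{k} c_j cos^j 2π(θ + (k-1)α/2)` for all `θ`. -/
theorem stmt_11 (lam α E : ℝ) (k : ℕ) :
    ∃ c : Fin (k + 1) → ℝ, ∀ θ : ℝ,
      (amoMat lam α θ E k).det =
        ∑ j : Fin (k + 1), c j * Real.cos (2 * π * (θ + ((k : ℝ) - 1) * α / 2)) ^ (j : ℕ) := by
  have hπ : (π : ℝ) ≠ 0 := Real.pi_ne_zero
  set cst : ℝ := ((k : ℝ) - 1) * α / 2 with hcst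
  obtain ⟨A, B, hA, hB, hAB⟩ := good_det lam α E cst k
  have key : ∀ y : ℝ, (amoMat lam α (y / (2 * π) - cst) E k).det = A.eval (Real.cos y) := by
    intro y
    have h1 := hAB y
    have h2 := hAB (-y)
    simp only at h1 h2
    rw [Real.cos_neg, Real.sin_neg] at h2
    have heven := amo_even lam α E k y
    rw [← hcst] at heven
    rw [heven] at h2
    linarith
  refine ⟨fun j => A.coeff j, fun θ => ?_⟩
  have hθ : θ = (2 * π * (θ + cst)) / (2 * π) - cst := by field_simp; ring
  have hdeg : A.natDegree < k + 1 :=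
    Nat.lt_succ_of_le (Polynomial.natDegree_le_iff_degree_le.mpr hA)
  calc (amoMat lam α θ E k).det
      = (amoMat lam α ((2 * π * (θ + cst)) / (2 * π) - cst) E k).det := by rw [← hθ]
    _ = A.eval (Real.cos (2 * π * (θ + cst))) := key _
    _ = ∑ j ∈ Finset.range (k + 1), A.coeff j * Real.cos (2 * π * (θ + cst)) ^ j :=
        Polynomial.eval_eq_sum_range' hdeg _
    _ = ∑ j : Fin (k + 1), A.coeff (j : ℕ) * Real.cos (2 * π * (θ + cst)) ^ (j : ℕ) :=
        (Fin.sum_univ_eq_sum_range (fun j => A.coeff j * Real.cos (2 * π * (θ + cst)) ^ j) (k+1)).symm
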